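/- The Rychkov system ẋ = y − (x⁵ − x³ + δx), ẏ = −x with δ = 0.236252 has no nonconstant periodic orbit. -/

import Mathlib

private theorem rych_fst {f : ℝ → ℝ × ℝ} {v : ℝ × ℝ} {t : ℝ} (h : HasDerivAt f v t) :
    HasDerivAt (fun s => (f s).1) v.1 t := by
  have h2 := (hasFDerivAt_fst (𝕜 := ℝ) (p := f t)).comp t h.hasFDerivAt
  have h3 : (ContinuousLinearMap.fst ℝ ℝ ℝ).comp (ContinuousLinearMap.toSpanSingleton ℝ v)
      = ContinuousLinearMap.toSpanSingleton ℝ v.1 := by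
    ext; simp
  exact hasDerivAt_iff_hasFDerivAt.2 (h3 ▸ h2)

private theorem rych_snd {f : ℝ → ℝ × ℝ} {v : ℝ × ℝ} {t : ℝ} (h : HasDerivAt f v t) :
    HasDerivAt (fun s => (f s).2) v.2 t := by
  have h2 := (hasFDerivAt_snd (𝕜 := ℝ) (p := f t)).comp t h.hasFDerivAt
  have h3 : (ContinuousLinearMap.snd ℝ ℝ ℝ).comp (ContinuousLinearMap.toSpanSingleton ℝ v)
      = ContinuousLinearMap.toSpanSingleton ℝ v.2 := by
    ext; simp
  exact hasDerivAt_iff_hasFDerivAt.2 (h3 ▸ h2)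

private noncomputable def rB (γ : ℝ → ℝ × ℝ) : ℝ → ℝ := fun s =>
  (γ s).2 ^ 4 + 2 * ((γ s).1 ^ 2 * (γ s).2 ^ 2) + 4/7 * ((γ s).1 ^ 7 * (γ s).2)
  - 4/5 * ((γ s).1 ^ 5 * (γ s).2) + 59063/187500 * ((γ s).1 ^ 3 * (γ s).2)
  + 1/3 * (γ s).1 ^ 12 - 4/5 * (γ s).1 ^ 10 + 184063/250000 * (γ s).1 ^ 8
  - 59063/187500 * (γ s).1 ^ 6 + 65988437969/62500000000 * (γ s).1 ^ 4

private theorem rych_Rneg (u : ℝ) :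
    -15383862835289141/11718750000000000 + 85465313907/15625000000*u
    - 883337947349/109375000000*u^2 + 302189/31250*u^3 - 927189/62500*u^4
    + 12*u^5 - 4*u^6 < 0 := by
  nlinarith [sq_nonneg (1 - 32049492715125000/15383861663414141*u
      + 8849216442796875/107687031643898987*u^2 + 15112638566109375/30767723326828282*u^3),
    sq_nonneg (u - 282952491598822068776511543999/116454462369995439724484622956*u^2
      + 33268954041844048719095944233/33272703534284411349852749416*u^3),
    sq_nonneg (u^2 - 216971323751851686530763818579383938877297/113915123520675828579240511576419756025162*u^3),
    sq_nonneg (u^3)]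

theorem stmt_18 (δ : ℝ) (hδ : δ = 236252 / 1000000)
    (γ : ℝ → ℝ × ℝ)
    (hsol : ∀ t : ℝ, HasDerivAt γ
      ((γ t).2 - ((γ t).1 ^ 5 - (γ t).1 ^ 3 + δ * (γ t).1), -(γ t).1) t)
    (T : ℝ) (hT : 0 < T) (hper : ∀ t : ℝ, γ (t + T) = γ t)
    (hnc : ∃ t : ℝ, γ t ≠ γ 0) : False := by
  subst hδ
  -- derivative of the Lyapunov function along the flow
  have key : ∀ t : ℝ, HasDerivAt (rB γ)
      ((γ t).1 ^ 4 * (-15383862835289141/11718750000000000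
        + 85465313907/15625000000*(γ t).1^2 - 883337947349/109375000000*((γ t).1^2)^2
        + 302189/31250*((γ t).1^2)^3 - 927189/62500*((γ t).1^2)^4
        + 12*((γ t).1^2)^5 - 4*((γ t).1^2)^6)) t := by
    intro t
    have hx : HasDerivAt (fun s => (γ s).1)
        ((γ t).2 - ((γ t).1 ^ 5 - (γ t).1 ^ 3 + 236252/1000000 * (γ t).1)) t :=
      rych_fst (hsol t)
    have hy : HasDerivAt (fun s => (γ s).2) (-(γ t).1) t := rych_snd (hsol t)
    have H := (((((((((hy.pow 4).add
      (((hx.pow 2).mul (hy.pow 2)).const_mul 2)).add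
      (((hx.pow 7).mul hy).const_mul (4/7))).sub
      (((hx.pow 5).mul hy).const_mul (4/5))).add
      (((hx.pow 3).mul hy).const_mul (59063/187500))).add
      ((hx.pow 12).const_mul (1/3))).sub
      ((hx.pow 10).const_mul (4/5))).add
      ((hx.pow 8).const_mul (184063/250000))).sub
      ((hx.pow 6).const_mul (59063/187500))).add
      ((hx.pow 4).const_mul (65988437969/62500000000))
    have H' : HasDerivAt (rB γ) _ t := H
    convert H' using 1
    push_cast
    simp only [Pi.pow_apply]
    ring
  -- the Lyapunov function is antitone
  have ha : Antitone (rB γ) := by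
    apply antitone_of_deriv_nonpos
    · exact fun t => (key t).differentiableAt
    · intro u
      rw [(key u).deriv]
      have hr := rych_Rneg ((γ u).1 ^ 2)
      have h4 : (0:ℝ) ≤ (γ u).1 ^ 4 := by positivity
      nlinarith [mul_nonneg h4 (neg_nonneg.2 hr.le)]
  -- periodicity
  have hpf : ∀ s : ℝ, rB γ (s + T) = rB γ s := by
    intro s; simp only [rB, hper s]
  have hN : ∀ n : ℕ, rB γ (n * T) = rB γ 0 := by
    intro n
    induction n with
    | zero => norm_num
    | succ k ih =>
      have e : ((k:ℝ) + 1) * T = (k:ℝ) * T + T := by ring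
      push_cast
      rw [e, hpf, ih]
  have hNn : ∀ n : ℕ, rB γ (-((n:ℝ) * T)) = rB γ 0 := by
    intro n
    induction n with
    | zero => norm_num
    | succ k ih =>
      have h1 := hpf (-(((k:ℝ) + 1) * T))
      have e : -(((k:ℝ) + 1) * T) + T = -((k:ℝ) * T) := by ring
      rw [e] at h1
      push_cast
      rw [← h1]
      exact ih
  -- the Lyapunov function is constant
  have hconst : ∀ s : ℝ, rB γ s = rB γ 0 := by
    intro s
    obtain ⟨n, hn⟩ := exists_nat_ge (|s| / T)
    have hTn : |s| ≤ n * T := by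
      rw [div_le_iff₀ hT] at hn; exact hn
    have h1 : rB γ s ≤ rB γ 0 := by
      rw [← hNn n]
      exact ha (by linarith [neg_abs_le s])
    have h2 : rB γ 0 ≤ rB γ s := by
      rw [← hN n]
      exact ha (le_trans (le_abs_self s) hTn)
    linarith
  have hz : ∀ u : ℝ, HasDerivAt (rB γ) 0 u := by
    intro u
    have hfun : rB γ = fun _ => rB γ 0 := funext hconst
    rw [hfun]
    exact hasDerivAt_const _ _
  -- hence x ≡ 0
  have hXall : ∀ t : ℝ, (γ t).1 = 0 := by
    intro t
    have h0 := (key t).unique (hz t)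
    by_contra hne
    have h4 : (0:ℝ) < (γ t).1 ^ 4 := by positivity
    have hr := rych_Rneg ((γ t).1 ^ 2)
    have := mul_neg_of_pos_of_neg h4 hr
    linarith
  -- hence y ≡ 0
  have hYall : ∀ t : ℝ, (γ t).2 = 0 := by
    intro t
    have hx : HasDerivAt (fun s => (γ s).1)
        ((γ t).2 - ((γ t).1 ^ 5 - (γ t).1 ^ 3 + 236252/1000000 * (γ t).1)) t :=
      rych_fst (hsol t)
    have hfun : (fun s => (γ s).1) = fun _ => (0:ℝ) := funext hXall
    rw [hfun] at hx
    have h0 := hx.unique (hasDerivAt_const _ _)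
    rw [hXall t] at h0
    norm_num at h0
    exact h0
  obtain ⟨t0, hne⟩ := hnc
  apply hne
  have e1 : γ t0 = (0, 0) := Prod.ext (hXall t0) (hYall t0)
  have e2 : γ 0 = (0, 0) := Prod.ext (hXall 0) (hYall 0)
  rw [e1, e2]
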